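/- Let 0 < q < 1 be real, let s ∈ ℂ be arbitrary, and let t ∈ ℂ with Re(t) > 0. Then both series below converge absolutely, all denominators 1 − q^{t+r} are nonzero (since |q^{t+r}| = q^{Re(t)+r} < 1), and Σ_{n=1}^∞ q^{nt} / ([n]_q)^s = (1−q)^s · Σ_{r=0}^∞ ((s)_r / r!) · q^{t+r} / (1 − q^{t+r}), where (s)_r = s(s+1)⋯(s+r−1) is the rising factorial (so (s)_r/r! is the generalized binomial coefficient C(s+r−1, r)), q^{nt} = exp(nt·log q), q^{t+r} = exp((t+r) log q), ([n]_q)^s = exp(s·log [n]_q), and (1−q)^s = exp(s·log(1−q)). -/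

import Mathlib

open Real Filter Topology

namespace Stmt8Aux

noncomputable def c (s : ℂ) (r : ℕ) : ℂ :=
  (∏ i ∈ Finset.range r, (s + (i : ℂ))) / (r.factorial : ℂ)

lemma c_zero (s : ℂ) : c s 0 = 1 := by simp [c]

lemma c_succ (s : ℂ) (r : ℕ) : c s (r + 1) = c s r * (s + r) / (r + 1) := by
  have h1 : ((r.factorial : ℂ)) ≠ 0 := Nat.cast_ne_zero.2 r.factorial_ne_zero
  have h2 : ((r : ℂ) + 1) ≠ 0 := by
    have : (0:ℝ) < (r:ℝ) + 1 := by positivity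
    intro h
    have := congrArg Complex.re h
    simp at this
    linarith
  simp only [c, Finset.prod_range_succ, Nat.factorial_succ]
  push_cast
  rw [div_mul_eq_mul_div, div_div, mul_comm ((r.factorial : ℂ)) ((r:ℂ)+1)]

lemma norm_c_succ (s : ℂ) (r : ℕ) :
    ‖c s (r + 1)‖ = ‖c s r‖ * ‖s + r‖ / (r + 1) := by
  rw [c_succ, norm_div, norm_mul]
  congr 1
  have : ((r : ℂ) + 1) = ((r + 1 : ℕ) : ℂ) := by push_cast; ring
  rw [this, Complex.norm_natCast]
  push_cast; ring

lemma summable_aux (s : ℂ) {ρ : ℝ} (h0 : 0 < ρ) (h1 : ρ < 1) :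
    Summable (fun r : ℕ => ‖c s r‖ * (r + 1) * ρ ^ r) := by
  apply summable_of_ratio_norm_eventually_le (r := (1 + ρ) / 2) (by linarith)
  filter_upwards [Filter.eventually_ge_atTop (⌈4 * (‖s‖ + 1) / (1 - ρ)⌉₊)] with r hr
  have hrR : 4 * (‖s‖ + 1) / (1 - ρ) ≤ (r : ℝ) :=
    le_trans (Nat.le_ceil _) (by exact_mod_cast hr)
  have hr4 : 4 * (‖s‖ + 1) ≤ (1 - ρ) * r := by
    rw [div_le_iff₀ (by linarith)] at hrR; linarith
  have hA : (0:ℝ) ≤ ‖c s r‖ := norm_nonneg _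
  have hP : (0:ℝ) < ρ ^ r := by positivity
  have hB : ‖s + (r:ℂ)‖ ≤ ‖s‖ + r := by
    calc ‖s + (r:ℂ)‖ ≤ ‖s‖ + ‖(r:ℂ)‖ := norm_add_le _ _
    _ = ‖s‖ + r := by rw [Complex.norm_natCast]
  have hBnn : (0:ℝ) ≤ ‖s + (r:ℂ)‖ := norm_nonneg _
  have hr1 : (0:ℝ) < (r:ℝ) + 1 := by positivity
  rw [Real.norm_eq_abs, Real.norm_eq_abs, abs_of_nonneg (by positivity),
    abs_of_nonneg (by positivity), norm_c_succ]
  push_cast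
  have key : ‖s + (r:ℂ)‖ * ((r:ℝ) + 1 + 1) * ρ ≤ (1 + ρ) / 2 * (((r:ℝ) + 1) * ((r:ℝ) + 1)) := by
    have hrn : (0:ℝ) ≤ (r:ℝ) := Nat.cast_nonneg r
    have t1 : ‖s + (r:ℂ)‖ * ((r:ℝ) + 1 + 1) * ρ ≤ (‖s‖ + (r:ℝ)) * ((r:ℝ) + 2) * ρ := by
      apply mul_le_mul_of_nonneg_right _ h0.le
      apply mul_le_mul hB (by linarith) (by positivity) (by positivity)
    have t2 : (‖s‖ + (r:ℝ)) * ((r:ℝ) + 2) * ρ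
        ≤ ρ * ((r:ℝ) ^ 2 + 2 * (r:ℝ)) + ‖s‖ * ((r:ℝ) + 2) := by
      nlinarith [mul_nonneg (norm_nonneg s) (by positivity : (0:ℝ) ≤ (r:ℝ) + 2)]
    have t3 : ‖s‖ * ((r:ℝ) + 2) ≤ (1 - ρ) / 2 * (((r:ℝ) + 1) * ((r:ℝ) + 1)) := by
      nlinarith [mul_le_mul_of_nonneg_right hr4 (by positivity : (0:ℝ) ≤ (r:ℝ) + 2),
        norm_nonneg s, mul_nonneg hrn hrn]
    nlinarith [t1, t2, t3, h0]
  calc ‖c s r‖ * ‖s + (r:ℂ)‖ / ((r:ℝ) + 1) * ((r:ℝ) + 1 + 1) * ρ ^ (r + 1)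
      = (‖c s r‖ * ρ ^ r / ((r:ℝ) + 1)) * (‖s + (r:ℂ)‖ * ((r:ℝ) + 1 + 1) * ρ) := by
        rw [pow_succ]; ring
    _ ≤ (‖c s r‖ * ρ ^ r / ((r:ℝ) + 1)) * ((1 + ρ) / 2 * (((r:ℝ) + 1) * ((r:ℝ) + 1))) := by
        apply mul_le_mul_of_nonneg_left key (by positivity)
    _ = (1 + ρ) / 2 * (‖c s r‖ * ((r:ℝ) + 1) * ρ ^ r) := by
        field_simp

noncomputable def gg (s : ℂ) (y : ℝ) : ℂ := ∑' r : ℕ, c s r * (y : ℂ) ^ r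

noncomputable def Dg (s : ℂ) (y : ℝ) : ℂ := ∑' r : ℕ, c s r * ((r : ℂ) * (y : ℂ) ^ (r - 1))

lemma S1 (s : ℂ) {y b : ℝ} (hb0 : 0 < b) (hb1 : b < 1) (hyb : |y| ≤ b) :
    Summable (fun r : ℕ => c s r * (y : ℂ) ^ r) := by
  apply Summable.of_norm_bounded (summable_aux s hb0 hb1)
  intro r
  rw [norm_mul, norm_pow, Complex.norm_real, Real.norm_eq_abs]
  calc ‖c s r‖ * |y| ^ r ≤ ‖c s r‖ * b ^ r :=
        mul_le_mul_of_nonneg_left (pow_le_pow_left₀ (abs_nonneg y) hyb r) (norm_nonneg _)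
    _ ≤ ‖c s r‖ * ((r : ℝ) + 1) * b ^ r := by
        apply mul_le_mul_of_nonneg_right _ (by positivity)
        nlinarith [norm_nonneg (c s r), Nat.cast_nonneg (α := ℝ) r]

lemma S2 (s : ℂ) {y b : ℝ} (hb0 : 0 < b) (hb1 : b < 1) (hyb : |y| ≤ b) :
    Summable (fun r : ℕ => c s r * (r : ℂ) * (y : ℂ) ^ r) := by
  apply Summable.of_norm_bounded (summable_aux s hb0 hb1)
  intro r
  rw [norm_mul, norm_mul, norm_pow, Complex.norm_real, Real.norm_eq_abs, Complex.norm_natCast]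
  calc ‖c s r‖ * (r : ℝ) * |y| ^ r ≤ ‖c s r‖ * (r : ℝ) * b ^ r := by
        apply mul_le_mul_of_nonneg_left (pow_le_pow_left₀ (abs_nonneg y) hyb r) (by positivity)
    _ ≤ ‖c s r‖ * ((r : ℝ) + 1) * b ^ r := by
        apply mul_le_mul_of_nonneg_right _ (by positivity)
        nlinarith [norm_nonneg (c s r), Nat.cast_nonneg (α := ℝ) r]

lemma norm_deriv_term_le (s : ℂ) (r : ℕ) {y b : ℝ} (hb0 : 0 < b) (hyb : |y| ≤ b) :
    ‖c s r * ((r : ℂ) * (y : ℂ) ^ (r - 1))‖ ≤ b⁻¹ * (‖c s r‖ * (r + 1) * b ^ r) := by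
  cases r with
  | zero => simp; positivity
  | succ n =>
    rw [norm_mul, norm_mul, norm_pow, Complex.norm_real, Real.norm_eq_abs,
      Nat.succ_sub_one, Complex.norm_natCast]
    have h1 : |y| ^ n ≤ b ^ n := pow_le_pow_left₀ (abs_nonneg y) hyb n
    have h2 : b⁻¹ * (‖c s (n+1)‖ * ((n:ℝ) + 1 + 1) * b ^ (n + 1))
        = ‖c s (n+1)‖ * ((n:ℝ) + 1 + 1) * b ^ n := by
      rw [pow_succ]; field_simp
    push_cast
    rw [h2]
    have := norm_nonneg (c s (n+1))
    nlinarith [pow_nonneg (abs_nonneg y) n, pow_nonneg hb0.le n,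
      mul_le_mul_of_nonneg_left h1 (mul_nonneg this (by positivity : (0:ℝ) ≤ (n:ℝ)+1))]

lemma S3 (s : ℂ) {y b : ℝ} (hb0 : 0 < b) (hb1 : b < 1) (hyb : |y| ≤ b) :
    Summable (fun r : ℕ => c s r * ((r : ℂ) * (y : ℂ) ^ (r - 1))) :=
  Summable.of_norm_bounded ((summable_aux s hb0 hb1).mul_left b⁻¹)
    (fun r => norm_deriv_term_le s r hb0 hyb)

lemma summable_zero (s : ℂ) : Summable (fun r : ℕ => c s r * ((0:ℝ) : ℂ) ^ r) := by
  apply summable_of_ne_finset_zero (s := {0})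
  intro r hr
  simp only [Finset.mem_singleton] at hr
  simp [zero_pow hr]

lemma hasDerivAt_gg (s : ℂ) {y : ℝ} (hy : |y| < 1) : HasDerivAt (gg s) (Dg s y) y := by
  set b := (|y| + 1) / 2 with hbdef
  have hb0 : 0 < b := by positivity
  have hb1 : b < 1 := by rw [hbdef]; linarith
  have hyb : |y| < b := by rw [hbdef]; linarith
  have hmem : y ∈ Set.Ioo (-b) b := by
    rcases abs_lt.mp hyb with ⟨h1, h2⟩; exact ⟨h1, h2⟩
  have h0mem : (0:ℝ) ∈ Set.Ioo (-b) b := ⟨by linarith, hb0⟩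
  unfold gg Dg
  refine hasDerivAt_tsum_of_isPreconnected
    (u := fun r : ℕ => b⁻¹ * (‖c s r‖ * (r + 1) * b ^ r))
    (g := fun (r : ℕ) (z : ℝ) => c s r * (z : ℂ) ^ r)
    (g' := fun (r : ℕ) (z : ℝ) => c s r * ((r : ℂ) * (z : ℂ) ^ (r - 1)))
    ((summable_aux s hb0 hb1).mul_left b⁻¹) isOpen_Ioo (convex_Ioo _ _).isPreconnected
    (fun r z _ => ?_)
    (fun r z hz => norm_deriv_term_le s r hb0 (le_of_lt (abs_lt.mpr ⟨hz.1, hz.2⟩)))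
    h0mem (summable_zero s) hmem
  exact ((hasDerivAt_pow r ((z : ℂ))).comp_ofReal).const_mul (c s r)

lemma ode (s : ℂ) {y : ℝ} (hy : |y| < 1) :
    (1 - (y : ℂ)) * Dg s y = s * gg s y := by
  set b := (|y| + 1) / 2 with hbdef
  have hb0 : 0 < b := by positivity
  have hb1 : b < 1 := by rw [hbdef]; linarith
  have hyb : |y| ≤ b := by rw [hbdef]; linarith
  have hS1 := S1 s hb0 hb1 hyb
  have hS2 := S2 s hb0 hb1 hyb
  have hS3 := S3 s hb0 hb1 hyb
  have hne : ∀ r : ℕ, ((r : ℂ) + 1) ≠ 0 := by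
    intro r
    have : (((r + 1 : ℕ)) : ℂ) ≠ 0 := Nat.cast_ne_zero.2 r.succ_ne_zero
    push_cast at this; exact this
  have h2 : ∀ r : ℕ, c s (r+1) * (((r:ℂ) + 1) * (y:ℂ) ^ r)
      = s * (c s r * (y:ℂ) ^ r) + c s r * (r:ℂ) * (y:ℂ) ^ r := by
    intro r
    rw [c_succ]
    field_simp [hne r]
  have h1 : Dg s y = ∑' r : ℕ, (s * (c s r * (y:ℂ) ^ r) + c s r * (r:ℂ) * (y:ℂ) ^ r) := by
    rw [Dg, Summable.tsum_eq_zero_add hS3]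
    simp only [Nat.cast_zero, zero_mul, mul_zero, zero_add, Nat.succ_sub_one]
    refine tsum_congr fun r => ?_
    rw [← h2 r]
    push_cast
    ring
  have h3 : (y:ℂ) * Dg s y = ∑' r : ℕ, c s r * (r:ℂ) * (y:ℂ) ^ r := by
    rw [Dg, ← tsum_mul_left]
    refine tsum_congr fun r => ?_
    cases r with
    | zero => simp
    | succ n => rw [Nat.succ_sub_one]; push_cast; rw [pow_succ]; ring
  have h4 : Dg s y = s * gg s y + ∑' r : ℕ, c s r * (r:ℂ) * (y:ℂ) ^ r := by
    rw [h1, Summable.tsum_add (hS1.mul_left s) hS2, tsum_mul_left]; rfl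
  rw [sub_mul, one_mul, h3, h4]
  ring

lemma gg_zero (s : ℂ) : gg s 0 = 1 := by
  rw [gg, tsum_eq_single 0 (fun r hr => by simp [zero_pow hr])]
  simp [c_zero]

lemma hasDerivAt_h (s : ℂ) {y : ℝ} (hy : |y| < 1) :
    HasDerivAt (fun z : ℝ => gg s z * Complex.exp (s * ((Real.log (1 - z) : ℝ) : ℂ))) 0 y := by
  have hy1 : (0:ℝ) < 1 - y := by rcases abs_lt.mp hy with ⟨h1, h2⟩; linarith
  have hlog : HasDerivAt (fun z : ℝ => Real.log (1 - z)) ((1 - y)⁻¹ * (-1)) y :=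
    (Real.hasDerivAt_log hy1.ne').comp y ((hasDerivAt_id y).const_sub 1)
  have hE : HasDerivAt (fun z : ℝ => Complex.exp (s * ((Real.log (1 - z) : ℝ) : ℂ)))
      (Complex.exp (s * ((Real.log (1 - y) : ℝ) : ℂ)) * (s * ((((1 - y)⁻¹ * (-1) : ℝ)) : ℂ))) y :=
    (hlog.ofReal_comp.const_mul s).cexp
  have hmul := (hasDerivAt_gg s hy).mul hE
  refine hmul.congr_deriv (Eq.symm ?_)
  have hODE := ode s hy
  have hne : (1 : ℂ) - (y : ℂ) ≠ 0 := by
    rw [show (1 : ℂ) - (y : ℂ) = ((1 - y : ℝ) : ℂ) by push_cast; ring]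
    exact Complex.ofReal_ne_zero.2 hy1.ne'
  push_cast
  field_simp
  linear_combination (-(Complex.exp (s * ((Real.log (1 - y) : ℝ) : ℂ)))) * hODE

lemma gg_eq (s : ℂ) {x : ℝ} (hx0 : 0 ≤ x) (hx1 : x < 1) :
    gg s x = Complex.exp (-(s * ((Real.log (1 - x) : ℝ) : ℂ))) := by
  set h : ℝ → ℂ := fun z => gg s z * Complex.exp (s * ((Real.log (1 - z) : ℝ) : ℂ)) with hdef
  have habs : ∀ y ∈ Set.Icc (0:ℝ) x, |y| < 1 := by
    intro y hy
    rw [abs_of_nonneg hy.1]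
    exact lt_of_le_of_lt hy.2 hx1
  have hconst : ∀ y ∈ Set.Icc (0:ℝ) x, h y = h 0 := by
    apply constant_of_has_deriv_right_zero
    · exact fun y hy => (hasDerivAt_h s (habs y hy)).continuousAt.continuousWithinAt
    · exact fun y hy =>
        (hasDerivAt_h s (habs y ⟨hy.1, hy.2.le⟩)).hasDerivWithinAt
  have hx := hconst x (Set.right_mem_Icc.2 hx0)
  have h0 : h 0 = 1 := by
    simp [hdef, gg_zero]
  rw [h0, hdef] at hx
  have hEne : Complex.exp (s * ((Real.log (1 - x) : ℝ) : ℂ)) ≠ 0 := Complex.exp_ne_zero _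
  rw [Complex.exp_neg]
  apply eq_inv_of_mul_eq_one_left
  simp only [hdef] at hx
  exact hx

lemma hasSum_binomial (s : ℂ) {x : ℝ} (hx0 : 0 ≤ x) (hx1 : x < 1) :
    HasSum (fun r : ℕ => c s r * (x : ℂ) ^ r)
      (Complex.exp (-(s * ((Real.log (1 - x) : ℝ) : ℂ)))) := by
  have hb0 : (0:ℝ) < (|x| + 1) / 2 := by positivity
  have hb1 : (|x| + 1) / 2 < 1 := by rw [abs_of_nonneg hx0]; linarith
  have hxb : |x| ≤ (|x| + 1) / 2 := by rw [abs_of_nonneg hx0]; linarith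
  have hsum := (S1 s hb0 hb1 hxb).hasSum
  rwa [show (∑' r : ℕ, c s r * (x : ℂ) ^ r) = gg s x from rfl,
    gg_eq s hx0 hx1] at hsum

end Stmt8Aux

set_option maxHeartbeats 1000000 in
open Stmt8Aux in
/-- For real `0 < q < 1`, any `s ∈ ℂ` and `t ∈ ℂ` with `Re t > 0`: all denominators
`1 - q^{t+r}` are nonzero, both series converge absolutely, and
`Σ_{n≥1} q^{nt}/([n]_q)^s = (1-q)^s Σ_{r≥0} ((s)_r/r!) q^{t+r}/(1-q^{t+r})`,
where `(s)_r = s(s+1)⋯(s+r-1)` is the rising factorial, `q^z = exp(z log q)`,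
`[n]_q = (1-qⁿ)/(1-q)` and `w^s = exp(s log w)` for `w > 0`. -/
theorem stmt8 (q : ℝ) (hq0 : 0 < q) (hq1 : q < 1) (s t : ℂ) (ht : 0 < t.re) :
    (∀ r : ℕ, (1 : ℂ) - Complex.exp ((t + (r : ℂ)) * (Real.log q : ℂ)) ≠ 0) ∧
    Summable (fun n : ℕ =>
      ‖Complex.exp (((n : ℂ) + 1) * t * (Real.log q : ℂ)) /
        (((1 - q ^ (n + 1)) / (1 - q) : ℝ) : ℂ) ^ s‖) ∧
    Summable (fun r : ℕ =>
      ‖(∏ i ∈ Finset.range r, (s + (i : ℂ))) / (r.factorial : ℂ) *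
        (Complex.exp ((t + (r : ℂ)) * (Real.log q : ℂ)) /
          (1 - Complex.exp ((t + (r : ℂ)) * (Real.log q : ℂ))))‖) ∧
    (∑' n : ℕ, Complex.exp (((n : ℂ) + 1) * t * (Real.log q : ℂ)) /
        (((1 - q ^ (n + 1)) / (1 - q) : ℝ) : ℂ) ^ s) =
      ((1 - q : ℝ) : ℂ) ^ s *
        ∑' r : ℕ, (∏ i ∈ Finset.range r, (s + (i : ℂ))) / (r.factorial : ℂ) *
          (Complex.exp ((t + (r : ℂ)) * (Real.log q : ℂ)) /
            (1 - Complex.exp ((t + (r : ℂ)) * (Real.log q : ℂ)))) := by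
  set L : ℝ := Real.log q with hLdef
  have hL : L < 0 := Real.log_neg hq0 hq1
  have hexpL : Real.exp L = q := Real.exp_log hq0
  have h1q : (0:ℝ) < 1 - q := by linarith
  have hcc : ∀ r : ℕ, (∏ i ∈ Finset.range r, (s + (i : ℂ))) / (r.factorial : ℂ) = c s r :=
    fun r => rfl
  -- norm of exponentials
  have hre : ∀ z : ℂ, (z * (L : ℂ)).re = z.re * L := by
    intro z; simp [Complex.mul_re]
  have hnormE : ∀ z : ℂ, ‖Complex.exp (z * (L : ℂ))‖ = Real.exp (z.re * L) := by
    intro z; rw [Complex.norm_exp, hre]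
  set B : ℝ := Real.exp (t.re * L) with hBdef
  have hB0 : 0 < B := Real.exp_pos _
  have hB1 : B < 1 := by
    rw [hBdef, Real.exp_lt_one_iff]
    exact mul_neg_of_pos_of_neg ht hL
  -- Part 1
  have hlt : ∀ r : ℕ, ‖Complex.exp ((t + (r : ℂ)) * (L : ℂ))‖ < 1 := by
    intro r
    rw [hnormE, Real.exp_lt_one_iff]
    apply mul_neg_of_pos_of_neg _ hL
    simp only [Complex.add_re, Complex.natCast_re]
    positivity
  have part1 : ∀ r : ℕ, (1 : ℂ) - Complex.exp ((t + (r : ℂ)) * (L : ℂ)) ≠ 0 := by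
    intro r h
    rw [sub_eq_zero] at h
    have := hlt r
    rw [← h] at this
    simp at this
  -- exact norm of E(t+r)
  have hnormEtr : ∀ r : ℕ, ‖Complex.exp ((t + (r : ℂ)) * (L : ℂ))‖ = B * q ^ r := by
    intro r
    rw [hnormE]
    have : (t + (r:ℂ)).re = t.re + r := by simp
    rw [this, add_mul, Real.exp_add, ← hexpL, ← Real.exp_nat_mul]
  -- Part 3
  have hq_pow_le : ∀ r : ℕ, B * q ^ r ≤ B := by
    intro r
    nlinarith [pow_le_one₀ hq0.le hq1.le (n := r), pow_nonneg hq0.le r]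
  have hden_lb : ∀ r : ℕ, 1 - B ≤ ‖1 - Complex.exp ((t + (r : ℂ)) * (L : ℂ))‖ := by
    intro r
    have h1 := norm_sub_norm_le (1 : ℂ) (Complex.exp ((t + (r : ℂ)) * (L : ℂ)))
    rw [norm_one, hnormEtr r] at h1
    linarith [hq_pow_le r]
  have part3 : Summable (fun r : ℕ =>
      ‖(∏ i ∈ Finset.range r, (s + (i : ℂ))) / (r.factorial : ℂ) *
        (Complex.exp ((t + (r : ℂ)) * (L : ℂ)) /
          (1 - Complex.exp ((t + (r : ℂ)) * (L : ℂ))))‖) := by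
    refine Summable.of_nonneg_of_le (fun r => norm_nonneg _) (fun r => ?_)
      ((summable_aux s hq0 hq1).mul_left (B / (1 - B)))
    rw [hcc r, norm_mul, norm_div, hnormEtr r]
    have h1B : (0:ℝ) < 1 - B := by linarith
    have hd := hden_lb r
    calc ‖c s r‖ * (B * q ^ r / ‖1 - Complex.exp ((t + (r : ℂ)) * (L : ℂ))‖)
        ≤ ‖c s r‖ * (B * q ^ r / (1 - B)) :=
          mul_le_mul_of_nonneg_left
            (div_le_div_of_nonneg_left (by positivity) h1B hd) (norm_nonneg _)
      _ ≤ B / (1 - B) * (‖c s r‖ * ((r : ℝ) + 1) * q ^ r) := by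
          rw [show ‖c s r‖ * (B * q ^ r / (1 - B)) = ‖c s r‖ * B * q ^ r / (1 - B) by ring,
            show B / (1 - B) * (‖c s r‖ * ((r : ℝ) + 1) * q ^ r)
              = B * (‖c s r‖ * ((r : ℝ) + 1) * q ^ r) / (1 - B) by ring]
          rw [div_le_div_iff_of_pos_right h1B]
          nlinarith [mul_nonneg (Nat.cast_nonneg (α := ℝ) r)
            (mul_nonneg (mul_nonneg hB0.le (norm_nonneg (c s r))) (pow_nonneg hq0.le r))]
  -- properties of [n+1]_q
  have hvpos : ∀ n : ℕ, (0:ℝ) < (1 - q ^ (n + 1)) / (1 - q) := by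
    intro n
    have : q ^ (n + 1) < 1 := pow_lt_one₀ hq0.le hq1 (Nat.succ_ne_zero n)
    exact div_pos (by linarith) h1q
  have hv1 : ∀ n : ℕ, (1:ℝ) ≤ (1 - q ^ (n + 1)) / (1 - q) := by
    intro n
    rw [le_div_iff₀ h1q, one_mul]
    have : q ^ (n + 1) ≤ q := by
      calc q ^ (n + 1) ≤ q ^ 1 := pow_le_pow_of_le_one hq0.le hq1.le (by omega)
        _ = q := pow_one q
    linarith
  have hv2 : ∀ n : ℕ, (1 - q ^ (n + 1)) / (1 - q) ≤ (1 - q)⁻¹ := by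
    intro n
    rw [div_le_iff₀ h1q, inv_mul_cancel₀ h1q.ne']
    have : 0 < q ^ (n + 1) := by positivity
    linarith
  -- norm of numerator
  have hnum_norm : ∀ n : ℕ, ‖Complex.exp (((n : ℂ) + 1) * t * (L : ℂ))‖ = B ^ (n + 1) := by
    intro n
    rw [hnormE]
    have h1 : (((n : ℂ) + 1) * t).re = ((n : ℝ) + 1) * t.re := by
      simp [Complex.mul_re, Complex.add_re, Complex.add_im]
    rw [h1, hBdef, ← Real.exp_nat_mul]
    push_cast
    ring_nf
  -- lower bound for denominator
  set m : ℝ := min 1 ((1 - q)⁻¹ ^ s.re) with hmdef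
  have hm0 : 0 < m := lt_min one_pos (Real.rpow_pos_of_pos (by positivity) _)
  have hmle : ∀ n : ℕ, m ≤ ((1 - q ^ (n + 1)) / (1 - q)) ^ s.re := by
    intro n
    rcases le_or_gt 0 s.re with hs | hs
    · refine le_trans (min_le_left _ _) ?_
      calc (1:ℝ) = 1 ^ s.re := (Real.one_rpow _).symm
        _ ≤ ((1 - q ^ (n + 1)) / (1 - q)) ^ s.re :=
          Real.rpow_le_rpow zero_le_one (hv1 n) hs
    · refine le_trans (min_le_right _ _) ?_
      exact Real.rpow_le_rpow_of_nonpos (hvpos n) (hv2 n) hs.le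
  have hterm_norm : ∀ n : ℕ,
      ‖Complex.exp (((n : ℂ) + 1) * t * (L : ℂ)) /
        (((1 - q ^ (n + 1)) / (1 - q) : ℝ) : ℂ) ^ s‖
      = B ^ (n + 1) / ((1 - q ^ (n + 1)) / (1 - q)) ^ s.re := by
    intro n
    rw [norm_div, hnum_norm,
      Complex.norm_cpow_eq_rpow_re_of_pos (hvpos n)]
  have part2 : Summable (fun n : ℕ =>
      ‖Complex.exp (((n : ℂ) + 1) * t * (L : ℂ)) /
        (((1 - q ^ (n + 1)) / (1 - q) : ℝ) : ℂ) ^ s‖) := by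
    refine Summable.of_nonneg_of_le (fun n => norm_nonneg _) (fun n => ?_)
      (((summable_geometric_of_lt_one hB0.le hB1).mul_left (B / m)))
    rw [hterm_norm n]
    have h1 : B ^ (n + 1) / ((1 - q ^ (n + 1)) / (1 - q)) ^ s.re ≤ B ^ (n + 1) / m :=
      div_le_div_of_nonneg_left (by positivity) hm0 (hmle n)
    calc B ^ (n + 1) / ((1 - q ^ (n + 1)) / (1 - q)) ^ s.re ≤ B ^ (n + 1) / m := h1
      _ = B / m * B ^ n := by rw [pow_succ]; ring
  -- the double-sum terms
  set a : ℕ → ℕ → ℂ := fun n r => c s r * Complex.exp (((n:ℂ)+1) * (t + (r:ℂ)) * (L:ℂ))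
    with hadef
  have hq_pow_exp : ∀ k : ℕ, (q:ℝ) ^ k = Real.exp ((k:ℝ) * L) := by
    intro k; rw [Real.exp_nat_mul, hexpL]
  have hqpow_le : ∀ n : ℕ, q ^ (n+1) ≤ q := by
    intro n
    calc q ^ (n + 1) ≤ q ^ 1 := pow_le_pow_of_le_one hq0.le hq1.le (by omega)
      _ = q := pow_one q
  have hnorm_a : ∀ n r : ℕ, ‖a n r‖ = ‖c s r‖ * (B ^ (n+1) * (q ^ (n+1)) ^ r) := by
    intro n r
    rw [hadef]
    simp only []
    rw [norm_mul, hnormE]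
    congr 1
    have h1 : (((n:ℂ)+1) * (t + (r:ℂ))).re = ((n:ℝ)+1) * (t.re + (r:ℝ)) := by
      simp [Complex.mul_re, Complex.add_re, Complex.add_im]
    rw [h1]
    have e1 : B ^ (n+1) = Real.exp (((n+1 : ℕ):ℝ) * (t.re * L)) := by
      rw [← Real.exp_nat_mul]
    have e2 : (q ^ (n+1)) ^ r = Real.exp ((((n+1) * r : ℕ):ℝ) * L) := by
      rw [← pow_mul, hq_pow_exp]
    rw [e1, e2, ← Real.exp_add]
    congr 1
    push_cast
    ring
  -- row sums (binomial series)
  have hrow : ∀ n : ℕ, HasSum (fun r => a n r)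
      (Complex.exp (((n:ℂ)+1) * t * (L:ℂ)) *
        Complex.exp (-(s * ((Real.log (1 - q ^ (n+1)) : ℝ) : ℂ)))) := by
    intro n
    have hx0 : (0:ℝ) ≤ q ^ (n+1) := by positivity
    have hx1 : q ^ (n+1) < 1 := pow_lt_one₀ hq0.le hq1 (Nat.succ_ne_zero n)
    have hb := (hasSum_binomial s hx0 hx1).mul_left (Complex.exp (((n:ℂ)+1) * t * (L:ℂ)))
    have hfun : ∀ r : ℕ, Complex.exp (((n:ℂ)+1) * t * (L:ℂ)) * (c s r * ((q ^ (n+1) : ℝ) : ℂ) ^ r)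
        = a n r := by
      intro r
      rw [hadef]
      simp only []
      have k1 : ((q ^ (n+1) : ℝ) : ℂ) = Complex.exp ((((n+1 : ℕ):ℝ) * L : ℝ) : ℂ) := by
        rw [hq_pow_exp, Complex.ofReal_exp]
      have k2 : ((q ^ (n+1) : ℝ) : ℂ) ^ r = Complex.exp ((r : ℂ) * ((((n+1 : ℕ):ℝ) * L : ℝ) : ℂ)) := by
        rw [k1, ← Complex.exp_nat_mul]
      rw [k2]
      have k3 : Complex.exp (((n:ℂ)+1) * t * (L:ℂ)) *
          Complex.exp ((r : ℂ) * ((((n+1 : ℕ):ℝ) * L : ℝ) : ℂ))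
          = Complex.exp (((n:ℂ)+1) * (t + (r:ℂ)) * (L:ℂ)) := by
        rw [← Complex.exp_add]
        congr 1
        push_cast
        ring
      calc Complex.exp (((n:ℂ)+1) * t * (L:ℂ)) *
            (c s r * Complex.exp ((r : ℂ) * ((((n+1 : ℕ):ℝ) * L : ℝ) : ℂ)))
          = c s r * (Complex.exp (((n:ℂ)+1) * t * (L:ℂ)) *
            Complex.exp ((r : ℂ) * ((((n+1 : ℕ):ℝ) * L : ℝ) : ℂ))) := by ring
        _ = c s r * Complex.exp (((n:ℂ)+1) * (t + (r:ℂ)) * (L:ℂ)) := by rw [k3]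
    simp only [hfun] at hb
    exact hb
  -- column sums (geometric series)
  have hcol : ∀ r : ℕ, HasSum (fun n => a n r)
      (c s r * (Complex.exp ((t + (r:ℂ)) * (L:ℂ)) /
        (1 - Complex.exp ((t + (r:ℂ)) * (L:ℂ))))) := by
    intro r
    set w : ℂ := Complex.exp ((t + (r:ℂ)) * (L:ℂ)) with hwdef
    have hg := (hasSum_geometric_of_norm_lt_one (show ‖w‖ < 1 from hlt r)).mul_left (c s r * w)
    have hfun : ∀ n : ℕ, c s r * w * w ^ n = a n r := by
      intro n
      rw [hadef]
      simp only []
      rw [show (((n:ℂ)+1) * (t + (r:ℂ)) * (L:ℂ)) = ((n+1 : ℕ) : ℂ) * ((t + (r:ℂ)) * (L:ℂ)) by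
        push_cast; ring, Complex.exp_nat_mul, ← hwdef]
      ring
    simp only [hfun] at hg
    have : c s r * w * (1 - w)⁻¹ = c s r * (w / (1 - w)) := by
      rw [div_eq_mul_inv]; ring
    rwa [this] at hg
  -- norm bound and product summability
  have hbound : ∀ n r : ℕ, ‖a n r‖ ≤ B ^ (n+1) * (‖c s r‖ * ((r:ℝ)+1) * q ^ r) := by
    intro n r
    rw [hnorm_a]
    have hpow : (q ^ (n+1)) ^ r ≤ q ^ r := by
      apply pow_le_pow_left₀ (by positivity) (hqpow_le n)
    calc ‖c s r‖ * (B ^ (n+1) * (q ^ (n+1)) ^ r) = B ^ (n+1) * (‖c s r‖ * (q ^ (n+1)) ^ r) := by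
          ring
      _ ≤ B ^ (n+1) * (‖c s r‖ * ((r:ℝ)+1) * q ^ r) := by
          apply mul_le_mul_of_nonneg_left _ (by positivity)
          calc ‖c s r‖ * (q ^ (n+1)) ^ r ≤ ‖c s r‖ * q ^ r :=
                mul_le_mul_of_nonneg_left hpow (norm_nonneg _)
            _ ≤ ‖c s r‖ * ((r:ℝ)+1) * q ^ r := by
                nlinarith [mul_nonneg (Nat.cast_nonneg (α := ℝ) r)
                  (mul_nonneg (norm_nonneg (c s r)) (pow_nonneg hq0.le r))]
  have hrow_norm : ∀ n : ℕ, Summable (fun r => ‖a n r‖) := by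
    intro n
    exact Summable.of_nonneg_of_le (fun r => norm_nonneg _) (hbound n)
      ((summable_aux s hq0 hq1).mul_left (B ^ (n+1)))
  set K : ℝ := ∑' r : ℕ, ‖c s r‖ * ((r:ℝ)+1) * q ^ r with hKdef
  have hcolsum : Summable (fun n : ℕ => ∑' r : ℕ, ‖a n r‖) := by
    refine Summable.of_nonneg_of_le (fun n => tsum_nonneg (fun r => norm_nonneg _))
      (fun n => ?_) ((summable_geometric_of_lt_one hB0.le hB1).mul_left (B * K))
    calc ∑' r : ℕ, ‖a n r‖ ≤ ∑' r : ℕ, B ^ (n+1) * (‖c s r‖ * ((r:ℝ)+1) * q ^ r) :=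
          Summable.tsum_le_tsum (hbound n) (hrow_norm n) ((summable_aux s hq0 hq1).mul_left _)
      _ = B ^ (n+1) * K := tsum_mul_left
      _ = B * K * B ^ n := by rw [pow_succ]; ring
  have hprod_norm : Summable (fun p : ℕ × ℕ => ‖a p.1 p.2‖) :=
    (summable_prod_of_nonneg (fun p => norm_nonneg _)).mpr ⟨hrow_norm, hcolsum⟩
  have hprod : Summable (Function.uncurry a) := Summable.of_norm hprod_norm
  -- cpow rewrites
  set W : ℂ := Complex.exp (s * ((Real.log (1 - q) : ℝ) : ℂ)) with hWdef
  have hWcp : ((1 - q : ℝ) : ℂ) ^ s = W := by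
    rw [Complex.cpow_def_of_ne_zero (Complex.ofReal_ne_zero.2 h1q.ne'),
      ← Complex.ofReal_log h1q.le, mul_comm]
  have hvcp : ∀ n : ℕ, (((1 - q ^ (n+1)) / (1 - q) : ℝ) : ℂ) ^ s
      = Complex.exp (s * ((Real.log (1 - q ^ (n+1)) - Real.log (1 - q) : ℝ) : ℂ)) := by
    intro n
    have hx1 : q ^ (n+1) < 1 := pow_lt_one₀ hq0.le hq1 (Nat.succ_ne_zero n)
    rw [Complex.cpow_def_of_ne_zero (Complex.ofReal_ne_zero.2 (hvpos n).ne'),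
      ← Complex.ofReal_log (hvpos n).le,
      Real.log_div (by linarith : (1:ℝ) - q ^ (n+1) ≠ 0) h1q.ne', mul_comm]
  have hterm_eq : ∀ n : ℕ,
      Complex.exp (((n:ℂ)+1) * t * (L:ℂ)) / (((1 - q ^ (n+1)) / (1 - q) : ℝ) : ℂ) ^ s
      = W * (Complex.exp (((n:ℂ)+1) * t * (L:ℂ)) *
          Complex.exp (-(s * ((Real.log (1 - q ^ (n+1)) : ℝ) : ℂ)))) := by
    intro n
    rw [hvcp n, div_eq_mul_inv, ← Complex.exp_neg, hWdef,
      ← Complex.exp_add, ← Complex.exp_add, ← Complex.exp_add]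
    congr 1
    push_cast
    ring
  -- final computation
  refine ⟨part1, part2, part3, ?_⟩
  simp only [hcc]
  calc (∑' n : ℕ, Complex.exp (((n:ℂ)+1) * t * (L:ℂ)) /
        (((1 - q ^ (n+1)) / (1 - q) : ℝ) : ℂ) ^ s)
      = ∑' n : ℕ, W * ∑' r : ℕ, a n r := by
        refine tsum_congr fun n => ?_
        rw [(hrow n).tsum_eq, hterm_eq n]
    _ = W * ∑' n : ℕ, ∑' r : ℕ, a n r := by rw [tsum_mul_left]
    _ = W * ∑' r : ℕ, ∑' n : ℕ, a n r := by
        rw [Summable.tsum_comm' (f := a) hprod (fun n => (hrow n).summable) (fun r => (hcol r).summable)]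
    _ = W * ∑' r : ℕ, c s r * (Complex.exp ((t + (r:ℂ)) * (L:ℂ)) /
          (1 - Complex.exp ((t + (r:ℂ)) * (L:ℂ)))) := by
        rw [tsum_congr fun r => (hcol r).tsum_eq]
    _ = ((1 - q : ℝ) : ℂ) ^ s * ∑' r : ℕ, c s r * (Complex.exp ((t + (r:ℂ)) * (L:ℂ)) /
          (1 - Complex.exp ((t + (r:ℂ)) * (L:ℂ)))) := by rw [hWcp]
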